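/- Let 1 < α < 2, β ∈ (0, α−1), λ₁ > 0, L > 0 and C > 0. Let k : (0,∞)×[0,L]×[0,L] → [0,∞) be a measurable function satisfying k(s,x,y) ≤ C s/(s^{1/α}+|y−x|)^{1+α} for all s ∈ (0,1] and x, y ∈ [0,L], and k(s,x,y) ≤ C e^{−λ₁ s} for all s ≥ 1 and x, y ∈ [0,L]. Then there exists a constant c > 0 depending only on α, β, C, L and λ₁ such that for every γ ∈ (0, (2−β)λ₁), every t ≥ 0 and every x ∈ [0,L], ∫₀^t e^{γ s} s^{−2β/α} ∫₀^L k(s,x,y)^{2−β} dy ds ≤ c ( γ^{(β+1−α)/α} + 1/((2−β)λ₁ − γ) ). -/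

import Mathlib

open MeasureTheory Set Filter

set_option maxHeartbeats 1000000


lemma my_integral_Ioi_add (f : ℝ → ℝ) (a c : ℝ) :
    ∫ u in Ioi c, f (u + a) = ∫ v in Ioi (c + a), f v := by
  have e : MeasurableEmbedding (fun u : ℝ => u + a) :=
    (Homeomorph.addRight a).measurableEmbedding
  have : (∫ v in Ioi (c + a), f v) =
      ∫ v in Ioi (c + a), f v ∂(Measure.map (fun u : ℝ => u + a) volume) := by
    rw [map_add_right_eq_self volume a]
  rw [this, e.setIntegral_map]
  congr 1
  simp [preimage_add_const_Ioi]

lemma my_integrableOn_Ioi_add {f : ℝ → ℝ} {a c : ℝ}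
    (h : IntegrableOn f (Ioi (c + a))) : IntegrableOn (fun u => f (u + a)) (Ioi c) := by
  have e : MeasurableEmbedding (fun u : ℝ => u + a) :=
    (Homeomorph.addRight a).measurableEmbedding
  have h' : IntegrableOn f (Ioi (c + a)) (Measure.map (fun u : ℝ => u + a) volume) := by
    rwa [map_add_right_eq_self volume a]
  have := (e.integrableOn_map_iff).mp h'
  simpa [preimage_add_const_Ioi, Function.comp_def] using this

lemma my_exp_int {δ : ℝ} (hδ : 0 < δ) : ∫ s in Ioi (1:ℝ), Real.exp (-δ * s) ≤ 1 / δ := by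
  have h := integral_comp_mul_left_Ioi (fun u => Real.exp (-u)) 1 hδ
  simp only [smul_eq_mul, mul_one] at h
  have h2 : (∫ s in Ioi (1:ℝ), Real.exp (-δ * s)) = δ⁻¹ * ∫ u in Ioi δ, Real.exp (-u) := by
    rw [← h]; congr 1; ext s; rw [neg_mul]
  rw [h2, integral_exp_neg_Ioi]
  rw [one_div]
  have : Real.exp (-δ) ≤ 1 := Real.exp_le_one_iff.mpr (by linarith)
  nlinarith [inv_pos.mpr hδ]

lemma my_aux_y {a pp : ℝ} (ha : 0 < a) (hp : 1 < pp) {L x : ℝ} (hL : 0 < L)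
    (hx : x ∈ Icc (0:ℝ) L) :
    ∫ y in Icc (0:ℝ) L, (a + |y - x|) ^ (-pp) ≤ 2 * (a ^ (1 - pp) / (pp - 1)) := by
  have hcont : Continuous fun y : ℝ => (a + |y - x|) ^ (-pp) := by
    apply Continuous.rpow_const
    · exact continuous_const.add (continuous_abs.comp (continuous_id.sub continuous_const))
    · intro y; left; positivity
  -- integrability of the shifted power on Ioi 0
  have hIoi : IntegrableOn (fun u : ℝ => (u + a) ^ (-pp)) (Ioi 0) := by
    have h1 := integrableOn_Ioi_rpow_of_lt (a := -pp) (by linarith) ha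
    exact my_integrableOn_Ioi_add (f := fun v : ℝ => v ^ (-pp)) (a := a) (c := 0)
      (by rwa [zero_add])
  have hIoinn : 0 ≤ᵐ[volume.restrict (Ioi (0:ℝ))] fun u : ℝ => (u + a) ^ (-pp) := by
    filter_upwards [ae_restrict_mem measurableSet_Ioi] with u hu
    have hu' : (0:ℝ) < u := hu
    exact Real.rpow_nonneg (by positivity) _
  -- value of full integral over Ioi 0
  have hJ : (∫ u in Ioi (0:ℝ), (u + a) ^ (-pp)) = a ^ (1 - pp) / (pp - 1) := by
    rw [my_integral_Ioi_add (fun v => v ^ (-pp)) a 0, zero_add,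
      integral_Ioi_rpow_of_lt (by linarith) ha]
    rw [show -pp + 1 = 1 - pp by ring]
    have h1 : (1:ℝ) - pp ≠ 0 := by linarith
    have h2 : pp - 1 ≠ 0 := by linarith
    field_simp
    ring
  have key : ∀ b : ℝ, 0 ≤ b → (∫ u in (0:ℝ)..b, (a + u) ^ (-pp)) ≤ a ^ (1 - pp) / (pp - 1) := by
    intro b hb
    rw [intervalIntegral.integral_of_le hb]
    have : (∫ u in Ioc (0:ℝ) b, (a + u) ^ (-pp)) = ∫ u in Ioc (0:ℝ) b, (u + a) ^ (-pp) := by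
      apply setIntegral_congr_fun measurableSet_Ioc; intro u _
      show (a + u) ^ (-pp) = (u + a) ^ (-pp)
      rw [add_comm]
    rw [this, ← hJ]
    exact setIntegral_mono_set hIoi hIoinn (HasSubset.Subset.eventuallyLE Ioc_subset_Ioi_self)
  -- split the integral at x
  have hInt1 : IntervalIntegrable (fun y : ℝ => (a + |y - x|) ^ (-pp)) volume 0 x :=
    hcont.intervalIntegrable _ _
  have hInt2 : IntervalIntegrable (fun y : ℝ => (a + |y - x|) ^ (-pp)) volume x L :=
    hcont.intervalIntegrable _ _
  have hsplit : (∫ y in Icc (0:ℝ) L, (a + |y - x|) ^ (-pp)) =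
      (∫ y in (0:ℝ)..x, (a + |y - x|) ^ (-pp)) + ∫ y in x..L, (a + |y - x|) ^ (-pp) := by
    rw [integral_Icc_eq_integral_Ioc, ← intervalIntegral.integral_of_le hL.le,
      ← intervalIntegral.integral_add_adjacent_intervals hInt1 hInt2]
  rw [hsplit]
  have h1 : (∫ y in (0:ℝ)..x, (a + |y - x|) ^ (-pp)) ≤ a ^ (1 - pp) / (pp - 1) := by
    have hcg : (∫ y in (0:ℝ)..x, (a + |y - x|) ^ (-pp))
        = ∫ y in (0:ℝ)..x, (a + (x - y)) ^ (-pp) := by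
      apply intervalIntegral.integral_congr
      intro y hy
      rw [uIcc_of_le hx.1] at hy
      show (a + |y - x|) ^ (-pp) = (a + (x - y)) ^ (-pp)
      rw [abs_of_nonpos (by linarith [hy.2]), neg_sub]
    rw [hcg]
    have := intervalIntegral.integral_comp_sub_left (a := 0) (b := x)
      (fun u => (a + u) ^ (-pp)) x
    rw [this, sub_self, sub_zero]
    exact key x hx.1
  have h2 : (∫ y in x..L, (a + |y - x|) ^ (-pp)) ≤ a ^ (1 - pp) / (pp - 1) := by
    have hcg : (∫ y in x..L, (a + |y - x|) ^ (-pp))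
        = ∫ y in x..L, (a + (y - x)) ^ (-pp) := by
      apply intervalIntegral.integral_congr
      intro y hy
      rw [uIcc_of_le hx.2] at hy
      show (a + |y - x|) ^ (-pp) = (a + (y - x)) ^ (-pp)
      rw [abs_of_nonneg (by linarith [hy.1])]
    rw [hcg]
    have := intervalIntegral.integral_comp_sub_right (a := x) (b := L)
      (fun u => (a + u) ^ (-pp)) x
    rw [this, sub_self]
    exact key (L - x) (by linarith [hx.2])
  linarith


/-- Lemma 3.6: weighted space-time integral bound for a kernel with a short-time
stable-type bound and long-time exponential decay, for `γ ∈ (0,(2-β)λ₁)`. -/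
theorem kernel_integral_bound_pos_gamma (α β lam₁ L C : ℝ) (hα1 : 1 < α) (hα2 : α < 2)
    (hβ0 : 0 < β) (hβ : β < α - 1) (hlam : 0 < lam₁) (hL : 0 < L) (hC : 0 < C) :
    ∃ c : ℝ, 0 < c ∧ ∀ k : ℝ → ℝ → ℝ → ℝ,
      Measurable (fun q : ℝ × ℝ × ℝ => k q.1 q.2.1 q.2.2) →
      (∀ s : ℝ, 0 < s → ∀ x ∈ Icc (0:ℝ) L, ∀ y ∈ Icc (0:ℝ) L, 0 ≤ k s x y) →
      (∀ s : ℝ, 0 < s → s ≤ 1 → ∀ x ∈ Icc (0:ℝ) L, ∀ y ∈ Icc (0:ℝ) L,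
        k s x y ≤ C * s / (s ^ (1/α) + |y - x|) ^ (1 + α)) →
      (∀ s : ℝ, 1 ≤ s → ∀ x ∈ Icc (0:ℝ) L, ∀ y ∈ Icc (0:ℝ) L,
        k s x y ≤ C * Real.exp (-lam₁ * s)) →
      ∀ γ : ℝ, 0 < γ → γ < (2 - β) * lam₁ → ∀ t : ℝ, 0 ≤ t → ∀ x ∈ Icc (0:ℝ) L,
        (∫ s in Ioc (0:ℝ) t, Real.exp (γ * s) * s ^ (-(2 * β) / α) *
            ∫ y in Icc (0:ℝ) L, k s x y ^ (2 - β))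
          ≤ c * (γ ^ ((β + 1 - α) / α) + 1 / ((2 - β) * lam₁ - γ)) := by
  have hα0 : (0:ℝ) < α := by linarith
  have hβ1 : β < 1 := by linarith
  set pp : ℝ := (1 + α) * (2 - β) with hpp_def
  have hpp1 : 1 < pp := by nlinarith
  set q : ℝ := -((1 + β) / α) with hq_def
  have hq1 : (-1:ℝ) < q := by
    have h1 : (1 + β) / α < 1 := (div_lt_one hα0).mpr (by linarith)
    rw [hq_def]; linarith
  have hq0 : 0 < q + 1 := by linarith
  set K₁ : ℝ := Real.exp (2 * lam₁) * C ^ (2 - β) * (2 / (pp - 1)) with hK1_def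
  have hK1 : 0 < K₁ := by
    have : (0:ℝ) < C ^ (2 - β) := Real.rpow_pos_of_pos hC _
    have h2 : (0:ℝ) < 2 / (pp - 1) := div_pos two_pos (by linarith)
    exact mul_pos (mul_pos (Real.exp_pos _) this) h2
  set K₂ : ℝ := L * C ^ (2 - β) with hK2_def
  have hK2 : 0 < K₂ := by
    have : (0:ℝ) < C ^ (2 - β) := Real.rpow_pos_of_pos hC _
    positivity
  have h2lam : (0:ℝ) < (2 - β) * lam₁ := by nlinarith
  set m : ℝ := min 1 ((2 - β) * lam₁)⁻¹ with hm_def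
  have hm : 0 < m := lt_min one_pos (inv_pos.mpr h2lam)
  refine ⟨K₁ / (q + 1) / m + K₂, by positivity, ?_⟩
  intro k _hkmeas hk0 hksmall hklarge γ hγ0 hγ t _ht x hx
  set δ : ℝ := (2 - β) * lam₁ - γ with hδ_def
  have hδ : 0 < δ := by rw [hδ_def]; linarith
  set g : ℝ → ℝ := fun s => if s ≤ 1 then K₁ * s ^ q else K₂ * Real.exp (-δ * s) with hg_def
  -- integrability of g
  have hg1 : IntegrableOn g (Ioc (0:ℝ) 1) := by
    have h1 : IntegrableOn (fun s : ℝ => s ^ q) (Ioc (0:ℝ) 1) := by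
      have h2 := intervalIntegral.intervalIntegrable_rpow' (a := (0:ℝ)) (b := 1) hq1
      rwa [intervalIntegrable_iff_integrableOn_Ioc_of_le zero_le_one] at h2
    exact IntegrableOn.congr_fun (h1.const_mul K₁)
      (fun s hs => by simp only [hg_def]; rw [if_pos hs.2]) measurableSet_Ioc
  have hg2 : IntegrableOn g (Ioi (1:ℝ)) := by
    have h1 : IntegrableOn (fun s : ℝ => Real.exp (-δ * s)) (Ioi 1) :=
      exp_neg_integrableOn_Ioi 1 hδ
    exact IntegrableOn.congr_fun (h1.const_mul K₂)
      (fun s hs => by simp only [hg_def]; rw [if_neg (not_le.mpr hs)]) measurableSet_Ioi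
  have hgIoi : IntegrableOn g (Ioi (0:ℝ)) := by
    rw [← Ioc_union_Ioi_eq_Ioi (zero_le_one (α := ℝ))]
    exact integrableOn_union.mpr ⟨hg1, hg2⟩
  have hgnn : 0 ≤ᵐ[volume.restrict (Ioi (0:ℝ))] g := by
    filter_upwards [ae_restrict_mem measurableSet_Ioi] with s hs
    have hs' : (0:ℝ) < s := hs
    simp only [hg_def]
    split
    · exact mul_nonneg hK1.le (Real.rpow_nonneg hs'.le _)
    · exact mul_nonneg hK2.le (Real.exp_pos _).le
  -- nonnegativity of the integrand
  have hFnn : 0 ≤ᵐ[volume.restrict (Ioc (0:ℝ) t)] fun s =>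
      Real.exp (γ * s) * s ^ (-(2 * β) / α) * ∫ y in Icc (0:ℝ) L, k s x y ^ (2 - β) := by
    filter_upwards [ae_restrict_mem measurableSet_Ioc] with s hs
    have hs0 : (0:ℝ) < s := hs.1
    have hinn : 0 ≤ ∫ y in Icc (0:ℝ) L, k s x y ^ (2 - β) :=
      setIntegral_nonneg measurableSet_Icc fun y hy =>
        Real.rpow_nonneg (hk0 s hs0 x hx y hy) _
    exact mul_nonneg (mul_nonneg (Real.exp_pos _).le (Real.rpow_nonneg hs0.le _)) hinn
  -- pointwise bound
  have hFg : (fun s => Real.exp (γ * s) * s ^ (-(2 * β) / α) *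
      ∫ y in Icc (0:ℝ) L, k s x y ^ (2 - β)) ≤ᵐ[volume.restrict (Ioc (0:ℝ) t)] g := by
    filter_upwards [ae_restrict_mem measurableSet_Ioc] with s hs
    have hs0 : (0:ℝ) < s := hs.1
    by_cases hs1 : s ≤ 1
    · -- small time
      have ha : (0:ℝ) < s ^ (1/α) := Real.rpow_pos_of_pos hs0 _
      have hinner : (∫ y in Icc (0:ℝ) L, k s x y ^ (2 - β))
          ≤ C ^ (2 - β) * s ^ (2 - β) * (2 * ((s ^ (1/α)) ^ (1 - pp) / (pp - 1))) := by
        have hb : ∀ y ∈ Icc (0:ℝ) L, k s x y ^ (2 - β)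
            ≤ C ^ (2 - β) * s ^ (2 - β) * (s ^ (1/α) + |y - x|) ^ (-pp) := by
          intro y hy
          have hB : (0:ℝ) < s ^ (1/α) + |y - x| :=
            add_pos_of_pos_of_nonneg ha (abs_nonneg _)
          have hD : (0:ℝ) < (s ^ (1/α) + |y - x|) ^ (1 + α) :=
            Real.rpow_pos_of_pos hB _
          have h1 : k s x y ^ (2 - β)
              ≤ (C * s / (s ^ (1/α) + |y - x|) ^ (1 + α)) ^ (2 - β) :=
            Real.rpow_le_rpow (hk0 s hs0 x hx y hy) (hksmall s hs0 hs1 x hx y hy)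
              (by linarith)
          refine h1.trans_eq ?_
          rw [Real.div_rpow (mul_nonneg hC.le hs0.le) hD.le,
            Real.mul_rpow hC.le hs0.le, ← Real.rpow_mul hB.le, ← hpp_def,
            Real.rpow_neg hB.le, div_eq_mul_inv]
        have hcont : Continuous fun y : ℝ =>
            C ^ (2 - β) * s ^ (2 - β) * (s ^ (1/α) + |y - x|) ^ (-pp) := by
          apply Continuous.mul continuous_const
          apply Continuous.rpow_const
          · exact continuous_const.add (continuous_abs.comp (continuous_id.sub continuous_const))
          · intro y; left
            exact (add_pos_of_pos_of_nonneg ha (abs_nonneg _)).ne'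
        have hIcc : IntegrableOn (fun y : ℝ =>
            C ^ (2 - β) * s ^ (2 - β) * (s ^ (1/α) + |y - x|) ^ (-pp)) (Icc 0 L) :=
          hcont.integrableOn_Icc
        have step1 : (∫ y in Icc (0:ℝ) L, k s x y ^ (2 - β))
            ≤ ∫ y in Icc (0:ℝ) L,
                C ^ (2 - β) * s ^ (2 - β) * (s ^ (1/α) + |y - x|) ^ (-pp) := by
          apply integral_mono_of_nonneg ?_ hIcc ?_
          · filter_upwards [ae_restrict_mem measurableSet_Icc] with y hy
            exact Real.rpow_nonneg (hk0 s hs0 x hx y hy) _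
          · filter_upwards [ae_restrict_mem measurableSet_Icc] with y hy
            exact hb y hy
        refine step1.trans ?_
        rw [integral_const_mul]
        exact mul_le_mul_of_nonneg_left (my_aux_y ha hpp1 hL hx)
          (mul_nonneg (Real.rpow_nonneg hC.le _) (Real.rpow_nonneg hs0.le _))
      have hE : Real.exp (γ * s) ≤ Real.exp (2 * lam₁) := by
        apply Real.exp_le_exp.mpr
        have h1 : γ * s ≤ γ := mul_le_of_le_one_right hγ0.le hs1
        nlinarith
      have hsq : s ^ (-(2 * β) / α) * (s ^ (2 - β) * (s ^ (1/α)) ^ (1 - pp)) = s ^ q := by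
        rw [← Real.rpow_mul hs0.le, ← Real.rpow_add hs0, ← Real.rpow_add hs0]
        congr 1
        rw [hq_def, hpp_def]
        field_simp
        ring
      have gv : g s = K₁ * s ^ q := by simp only [hg_def]; rw [if_pos hs1]
      show Real.exp (γ * s) * s ^ (-(2 * β) / α) *
          (∫ y in Icc (0:ℝ) L, k s x y ^ (2 - β)) ≤ g s
      have hT : (0:ℝ) ≤ (s ^ (1/α)) ^ (1 - pp) := Real.rpow_nonneg ha.le _
      calc Real.exp (γ * s) * s ^ (-(2 * β) / α) * (∫ y in Icc (0:ℝ) L, k s x y ^ (2 - β))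
          ≤ Real.exp (γ * s) * s ^ (-(2 * β) / α) *
            (C ^ (2 - β) * s ^ (2 - β) * (2 * ((s ^ (1/α)) ^ (1 - pp) / (pp - 1)))) :=
            mul_le_mul_of_nonneg_left hinner
              (mul_nonneg (Real.exp_pos _).le (Real.rpow_nonneg hs0.le _))
        _ ≤ Real.exp (2 * lam₁) * s ^ (-(2 * β) / α) *
            (C ^ (2 - β) * s ^ (2 - β) * (2 * ((s ^ (1/α)) ^ (1 - pp) / (pp - 1)))) := by
            have hnn : (0:ℝ) ≤ C ^ (2 - β) * s ^ (2 - β) *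
                (2 * ((s ^ (1/α)) ^ (1 - pp) / (pp - 1))) := by
              apply mul_nonneg (mul_nonneg (Real.rpow_nonneg hC.le _)
                (Real.rpow_nonneg hs0.le _))
              have : (0:ℝ) < pp - 1 := by linarith
              positivity
            exact mul_le_mul_of_nonneg_right
              (mul_le_mul_of_nonneg_right hE (Real.rpow_nonneg hs0.le _)) hnn
        _ = Real.exp (2 * lam₁) * C ^ (2 - β) * (2 / (pp - 1)) *
            (s ^ (-(2 * β) / α) * (s ^ (2 - β) * (s ^ (1/α)) ^ (1 - pp))) := by ring
        _ = K₁ * s ^ q := by rw [hsq, ← hK1_def]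
        _ = g s := gv.symm
    · push_neg at hs1
      have hb : ∀ y ∈ Icc (0:ℝ) L, k s x y ^ (2 - β)
          ≤ C ^ (2 - β) * Real.exp (-lam₁ * s * (2 - β)) := by
        intro y hy
        have h1 : k s x y ^ (2 - β) ≤ (C * Real.exp (-lam₁ * s)) ^ (2 - β) :=
          Real.rpow_le_rpow (hk0 s hs0 x hx y hy) (hklarge s hs1.le x hx y hy) (by linarith)
        refine h1.trans_eq ?_
        rw [Real.mul_rpow hC.le (Real.exp_pos _).le, ← Real.exp_mul]
      have hinner : (∫ y in Icc (0:ℝ) L, k s x y ^ (2 - β))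
          ≤ L * (C ^ (2 - β) * Real.exp (-lam₁ * s * (2 - β))) := by
        have step1 : (∫ y in Icc (0:ℝ) L, k s x y ^ (2 - β))
            ≤ ∫ _y in Icc (0:ℝ) L, C ^ (2 - β) * Real.exp (-lam₁ * s * (2 - β)) := by
          apply integral_mono_of_nonneg ?_ ?_ ?_
          · filter_upwards [ae_restrict_mem measurableSet_Icc] with y hy
            exact Real.rpow_nonneg (hk0 s hs0 x hx y hy) _
          · exact integrableOn_const measure_Icc_lt_top.ne
          · filter_upwards [ae_restrict_mem measurableSet_Icc] with y hy
            exact hb y hy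
        refine step1.trans_eq ?_
        rw [setIntegral_const, smul_eq_mul, Real.volume_real_Icc_of_le hL.le, sub_zero]
      have hspow : s ^ (-(2 * β) / α) ≤ 1 :=
        Real.rpow_le_one_of_one_le_of_nonpos hs1.le
          (div_nonpos_of_nonpos_of_nonneg (by linarith) hα0.le)
      have gv : g s = K₂ * Real.exp (-δ * s) := by
        simp only [hg_def]; rw [if_neg (not_le.mpr hs1)]
      show Real.exp (γ * s) * s ^ (-(2 * β) / α) *
          (∫ y in Icc (0:ℝ) L, k s x y ^ (2 - β)) ≤ g s
      calc Real.exp (γ * s) * s ^ (-(2 * β) / α) * (∫ y in Icc (0:ℝ) L, k s x y ^ (2 - β))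
          ≤ Real.exp (γ * s) * s ^ (-(2 * β) / α) *
              (L * (C ^ (2 - β) * Real.exp (-lam₁ * s * (2 - β)))) :=
            mul_le_mul_of_nonneg_left hinner
              (mul_nonneg (Real.exp_pos _).le (Real.rpow_nonneg hs0.le _))
        _ ≤ Real.exp (γ * s) * 1 *
              (L * (C ^ (2 - β) * Real.exp (-lam₁ * s * (2 - β)))) := by
            apply mul_le_mul_of_nonneg_right
              (mul_le_mul_of_nonneg_left hspow (Real.exp_pos _).le)
            exact mul_nonneg hL.le (mul_nonneg (Real.rpow_nonneg hC.le _) (Real.exp_pos _).le)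
        _ = K₂ * Real.exp (-δ * s) := by
            rw [hK2_def, hδ_def, mul_one]
            rw [show -((2 - β) * lam₁ - γ) * s = γ * s + -lam₁ * s * (2 - β) by ring,
              Real.exp_add]
            ring
        _ = g s := gv.symm
  -- value of the g integrals
  have v1 : (∫ s in Ioc (0:ℝ) 1, g s) = K₁ * (1 / (q + 1)) := by
    have h1 : (∫ s in Ioc (0:ℝ) 1, g s) = ∫ s in Ioc (0:ℝ) 1, K₁ * s ^ q :=
      setIntegral_congr_fun measurableSet_Ioc
        (fun s hs => by simp only [hg_def]; rw [if_pos hs.2])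
    rw [h1, integral_const_mul]
    congr 1
    rw [← intervalIntegral.integral_of_le (zero_le_one (α := ℝ)),
      integral_rpow (Or.inl hq1), Real.one_rpow,
      Real.zero_rpow (by linarith : q + 1 ≠ 0)]
    ring
  have v2 : (∫ s in Ioi (1:ℝ), g s) ≤ K₂ * (1 / δ) := by
    have h1 : (∫ s in Ioi (1:ℝ), g s) = K₂ * ∫ s in Ioi (1:ℝ), Real.exp (-δ * s) := by
      rw [setIntegral_congr_fun measurableSet_Ioi
        (fun s hs => by simp only [hg_def]; rw [if_neg (not_le.mpr hs)]), integral_const_mul]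
    rw [h1]
    exact mul_le_mul_of_nonneg_left (by simpa using my_exp_int hδ) hK2.le
  -- lower bound on the RHS factor
  have he : (β + 1 - α) / α ≤ 0 := div_nonpos_of_nonpos_of_nonneg (by linarith) hα0.le
  have hγe : 0 ≤ γ ^ ((β + 1 - α) / α) := Real.rpow_nonneg hγ0.le _
  have hR : m ≤ γ ^ ((β + 1 - α) / α) + 1 / δ := by
    by_cases hγ1 : γ ≤ 1
    · have h1 : (1:ℝ) ≤ γ ^ ((β + 1 - α) / α) :=
        Real.one_le_rpow_of_pos_of_le_one_of_nonpos hγ0 hγ1 he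
      have h2 : 0 < 1 / δ := by positivity
      have h3 : m ≤ 1 := min_le_left _ _
      linarith
    · push_neg at hγ1
      have h1 : 1 / ((2 - β) * lam₁) ≤ 1 / δ :=
        one_div_le_one_div_of_le hδ (by rw [hδ_def]; linarith)
      have h3 : m ≤ ((2 - β) * lam₁)⁻¹ := min_le_right _ _
      rw [one_div] at h1
      linarith
  -- put everything together
  calc (∫ s in Ioc (0:ℝ) t, Real.exp (γ * s) * s ^ (-(2 * β) / α) *
      ∫ y in Icc (0:ℝ) L, k s x y ^ (2 - β))
      ≤ ∫ s in Ioc (0:ℝ) t, g s :=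
        integral_mono_of_nonneg hFnn (hgIoi.mono_set Ioc_subset_Ioi_self) hFg
    _ ≤ ∫ s in Ioi (0:ℝ), g s :=
        setIntegral_mono_set hgIoi hgnn (HasSubset.Subset.eventuallyLE Ioc_subset_Ioi_self)
    _ = (∫ s in Ioc (0:ℝ) 1, g s) + ∫ s in Ioi (1:ℝ), g s := by
        rw [← Ioc_union_Ioi_eq_Ioi (zero_le_one (α := ℝ)),
          setIntegral_union (Ioc_disjoint_Ioi le_rfl) measurableSet_Ioi hg1 hg2]
    _ ≤ K₁ * (1 / (q + 1)) + K₂ * (1 / δ) := by rw [v1]; linarith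
    _ ≤ (K₁ / (q + 1) / m + K₂) * (γ ^ ((β + 1 - α) / α) + 1 / δ) := by
        have hA : 0 ≤ K₁ / (q + 1) := by positivity
        have e1 : K₁ / (q + 1) / m * m = K₁ / (q + 1) := div_mul_cancel₀ _ hm.ne'
        have e2 : K₁ / (q + 1) / m * m ≤ K₁ / (q + 1) / m * (γ ^ ((β + 1 - α) / α) + 1 / δ) :=
          mul_le_mul_of_nonneg_left hR (by positivity)
        have e3 : K₂ * (1 / δ) ≤ K₂ * (γ ^ ((β + 1 - α) / α) + 1 / δ) :=
          mul_le_mul_of_nonneg_left (by linarith) hK2.le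
        have e4 : (K₁ / (q + 1) / m + K₂) * (γ ^ ((β + 1 - α) / α) + 1 / δ)
            = K₁ / (q + 1) / m * (γ ^ ((β + 1 - α) / α) + 1 / δ)
              + K₂ * (γ ^ ((β + 1 - α) / α) + 1 / δ) := by ring
        have e5 : K₁ * (1 / (q + 1)) = K₁ / (q + 1) := by ring
        linarith [e1, e2, e3, e4, e5]
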